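/- For f₁, f₂ ∈ BD_p(G), the pairing ⟨Δ_p f₁ − Δ_p f₂, f₁ − f₂⟩ = ∑_{g∈G} ∑_{s∈S} (|f₁(gs⁻¹)−f₁(g)|^{p−2}(f₁(gs⁻¹)−f₁(g)) − |f₂(gs⁻¹)−f₂(g)|^{p−2}(f₂(gs⁻¹)−f₂(g))) · conj((f₁−f₂)(gs⁻¹) − (f₁−f₂)(g)) equals 0 if and only if f₁(gs⁻¹) − f₁(g) = f₂(gs⁻¹) − f₂(g) for all g ∈ G and all s ∈ S. -/

import Mathlib

open Filter Topology

namespace PHB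

variable {G : Type*} [Group G]

/-- One Dirichlet term `‖f(gs⁻¹) − f(g)‖^p`. -/
noncomputable def dpTerm (p : ℝ) (f : G → ℂ) (s g : G) : ℝ := ‖f (g * s⁻¹) - f g‖ ^ p

/-- Membership in `D_p(G)`. -/
def MemDp (p : ℝ) (S : Finset G) (f : G → ℂ) : Prop :=
  ∀ s ∈ S, Summable (dpTerm p f s)

/-- The Dirichlet `p`-sum `∑_{s∈S}∑_{g∈G} ‖f(gs⁻¹) − f(g)‖^p`. -/
noncomputable def dirSum (p : ℝ) (S : Finset G) (f : G → ℂ) : ℝ :=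
  ∑ s ∈ S, ∑' g, dpTerm p f s g

/-- The `D_p`-norm `(∑_{s,g}|f(gs⁻¹)−f(g)|^p + |f(e)|^p)^{1/p}`. -/
noncomputable def dpNorm (p : ℝ) (S : Finset G) (f : G → ℂ) : ℝ :=
  (dirSum p S f + ‖f 1‖ ^ p) ^ (1/p)

/-- The norm on `D_p(G)/ℂ`: `(∑_{s,g}|f(gs⁻¹)−f(g)|^p)^{1/p}`. -/
noncomputable def qNorm (p : ℝ) (S : Finset G) (f : G → ℂ) : ℝ :=
  dirSum p S f ^ (1/p)

/-- Boundedness of a function. -/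
def BddFun (f : G → ℂ) : Prop := ∃ M : ℝ, ∀ g, ‖f g‖ ≤ M

/-- The sup norm. -/
noncomputable def supNorm (f : G → ℂ) : ℝ := ⨆ g, ‖f g‖

/-- The `BD_p`-norm `‖f‖_∞ + (∑_{s,g}|f(gs⁻¹)−f(g)|^p)^{1/p}`. -/
noncomputable def bdpNorm (p : ℝ) (S : Finset G) (f : G → ℂ) : ℝ :=
  supNorm f + dirSum p S f ^ (1/p)

/-- Membership in `BD_p(G)`: bounded and finite Dirichlet `p`-sum. -/
def MemBDp (p : ℝ) (S : Finset G) (f : G → ℂ) : Prop := BddFun f ∧ MemDp p S f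

/-- Membership in `ℓ^p(G)`. -/
def MemLp' (p : ℝ) (f : G → ℂ) : Prop := Summable fun g => ‖f g‖ ^ p

/-- `f` lies in the `D_p`-closure of the finitely supported functions `ℂG`. -/
def InClosCG (p : ℝ) (S : Finset G) (f : G → ℂ) : Prop :=
  MemDp p S f ∧ ∀ ε : ℝ, 0 < ε →
    ∃ h : G → ℂ, (Function.support h).Finite ∧ dpNorm p S (f - h) < ε

/-- `f` is a bounded function in the `D_p`-closure of `ℂG`. -/
def InBClosCG (p : ℝ) (S : Finset G) (f : G → ℂ) : Prop := BddFun f ∧ InClosCG p S f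

/-- `f` lies in the `D_p`-closure of `ℓ^p(G)`. -/
def InClosLp (p : ℝ) (S : Finset G) (f : G → ℂ) : Prop :=
  MemDp p S f ∧ ∀ ε : ℝ, 0 < ε →
    ∃ h : G → ℂ, MemLp' p h ∧ dpNorm p S (f - h) < ε

/-- `f` is a bounded function in the `D_p`-closure of `ℓ^p(G)`. -/
def InBClosLp (p : ℝ) (S : Finset G) (f : G → ℂ) : Prop := BddFun f ∧ InClosLp p S f

/-- `f` lies in the `D_p`-closure of `ℓ^p(G) ⊕ ℂ`. -/
def InClosLpC (p : ℝ) (S : Finset G) (f : G → ℂ) : Prop :=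
  MemDp p S f ∧ ∀ ε : ℝ, 0 < ε →
    ∃ (h : G → ℂ) (c : ℂ), MemLp' p h ∧ dpNorm p S (f - h - Function.const G c) < ε

/-- A character (nonzero multiplicative linear functional) on `BD_p(G)`. -/
structure BDpChar (p : ℝ) (S : Finset G) where
  toFun : {f : G → ℂ // MemBDp p S f} → ℂ
  map_add : ∀ (f h : {f : G → ℂ // MemBDp p S f}) (hm : MemBDp p S (f.1 + h.1)),
    toFun ⟨f.1 + h.1, hm⟩ = toFun f + toFun h
  map_mul : ∀ (f h : {f : G → ℂ // MemBDp p S f}) (hm : MemBDp p S (f.1 * h.1)),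
    toFun ⟨f.1 * h.1, hm⟩ = toFun f * toFun h
  map_smul : ∀ (c : ℂ) (f : {f : G → ℂ // MemBDp p S f}) (hm : MemBDp p S (c • f.1)),
    toFun ⟨c • f.1, hm⟩ = c * toFun f
  map_one : ∀ hm : MemBDp p S (1 : G → ℂ), toFun ⟨1, hm⟩ = 1

/-- The weak-* topology on the spectrum `Sp(BD_p(G))`. -/
noncomputable instance (p : ℝ) (S : Finset G) : TopologicalSpace (BDpChar p S) :=
  TopologicalSpace.induced BDpChar.toFun Pi.topologicalSpace

/-- The evaluation embedding `i : G → Sp(BD_p(G))`, `(i g)(f) = f(g)`. -/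
def evalChar (p : ℝ) (S : Finset G) (g : G) : BDpChar p S where
  toFun := fun f => f.1 g
  map_add := fun _ _ _ => rfl
  map_mul := fun _ _ _ => rfl
  map_smul := fun _ _ _ => rfl
  map_one := fun _ => rfl

/-- The `p`-Laplacian `Δ_p f(g) = ∑_{s∈S} |f(gs⁻¹)−f(g)|^{p−2}(f(gs⁻¹)−f(g))`. -/
noncomputable def pLap (p : ℝ) (S : Finset G) (f : G → ℂ) (g : G) : ℂ :=
  ∑ s ∈ S, ((‖f (g * s⁻¹) - f g‖ ^ (p - 2) : ℝ) : ℂ) * (f (g * s⁻¹) - f g)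

/-- `f` is `p`-harmonic: `f ∈ D_p(G)` and `Δ_p f ≡ 0`. -/
def PHarmonic (p : ℝ) (S : Finset G) (f : G → ℂ) : Prop :=
  MemDp p S f ∧ ∀ g, pLap p S f g = 0

/-- The `p`-harmonic boundary `∂_p(G) ⊆ Sp(BD_p(G)) \ G`. -/
def pBoundary (p : ℝ) (S : Finset G) : Set (BDpChar p S) :=
  {x | (∀ g : G, x ≠ evalChar p S g) ∧
    ∀ (f : G → ℂ) (hf : MemBDp p S f), InBClosCG p S f → x.toFun ⟨f, hf⟩ = 0}

/-- The word metric on `G` with respect to the generating set `S`. -/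
noncomputable def wordDist (S : Finset G) (x y : G) : ℕ :=
  sInf {n | ∃ l : List G, (∀ a ∈ l, a ∈ S) ∧ l.length = n ∧ x⁻¹ * y = l.prod}

/-- The word length `|g| = d(e,g)`. -/
noncomputable def wordLen (S : Finset G) (g : G) : ℕ := wordDist S 1 g

/-- Right translation `f_x(g) = f(gx⁻¹)`. -/
def translateFun (f : G → ℂ) (x : G) : G → ℂ := fun g => f (g * x⁻¹)

/-- `φ : G → H` is a rough isometry with constants `a, b, c` for the word metrics. -/
def RoughIsom {G H : Type*} [Group G] [Group H] (S : Finset G) (T : Finset H)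
    (φ : G → H) (a b c : ℝ) : Prop :=
  1 ≤ a ∧ 0 ≤ b ∧ 0 < c ∧
  (∀ x y : G, (1/a) * (wordDist S x y : ℝ) - b ≤ (wordDist T (φ x) (φ y) : ℝ) ∧
    (wordDist T (φ x) (φ y) : ℝ) ≤ a * (wordDist S x y : ℝ) + b) ∧
  ∀ h : H, ∃ x : G, (wordDist T (φ x) h : ℝ) < c

/-- `S` is a symmetric generating set of `G`. -/
def SymmGen (S : Finset G) : Prop :=
  (∀ s ∈ S, s⁻¹ ∈ S) ∧ Subgroup.closure (S : Set G) = ⊤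

end PHB

private lemma summable_finset_sum {ι κ : Type*} (s : Finset ι) (f : ι → κ → ℝ)
    (h : ∀ i ∈ s, Summable (f i)) : Summable fun n => ∑ i ∈ s, f i n := by
  classical
  induction s using Finset.induction with
  | empty => simpa using summable_zero
  | insert _ _ hx ih =>
    rename_i a t
    simp only [Finset.sum_insert hx]
    exact (h a (Finset.mem_insert_self a t)).add (ih fun i hi => h i (Finset.mem_insert_of_mem hi))

private lemma rpow_pred_mul {q : ℝ} (hq : q + 1 ≠ 0) {r : ℝ} (hr : 0 ≤ r) :
    r ^ q * r = r ^ (q + 1) := by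
  rcases hr.eq_or_lt with h | h
  · rw [← h, Real.zero_rpow hq, mul_zero]
  · rw [Real.rpow_add_one h.ne' q]

private lemma rpow_p1 {p : ℝ} (hp : 1 < p) {r : ℝ} (hr : 0 ≤ r) :
    r ^ (p-2) * r = r ^ (p-1) := by
  rw [rpow_pred_mul (by intro h; nlinarith [h] : p - 2 + 1 ≠ 0) hr]; congr 1; ring

private lemma mono_prod_nonneg {p : ℝ} (hp : 1 < p) {r t : ℝ} (hr : 0 ≤ r) (ht : 0 ≤ t) :
    0 ≤ (r ^ (p-1) - t ^ (p-1)) * (r - t) := by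
  rcases le_total r t with h | h
  · have := Real.rpow_le_rpow hr h (by linarith : (0:ℝ) ≤ p - 1)
    nlinarith
  · have := Real.rpow_le_rpow ht h (by linarith : (0:ℝ) ≤ p - 1)
    nlinarith

private lemma rpow_p2 {p : ℝ} (hp : 1 < p) {r : ℝ} (hr : 0 ≤ r) :
    r ^ (p-1) * r = r ^ p := by
  rw [rpow_pred_mul (by intro h; nlinarith [h] : p - 1 + 1 ≠ 0) hr]; congr 1; ring

private lemma norm_term_le {p : ℝ} (hp : 1 < p) (z w : ℂ) :
    ‖(((‖z‖ ^ (p-2) : ℝ) : ℂ) * z - ((‖w‖ ^ (p-2) : ℝ) : ℂ) * w) * (starRingEnd ℂ) (z - w)‖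
      ≤ 2 * (‖z‖ ^ p + ‖w‖ ^ p) := by
  have hu : (0:ℝ) ≤ ‖z‖ ^ (p-2) := Real.rpow_nonneg (norm_nonneg z) _
  have hv : (0:ℝ) ≤ ‖w‖ ^ (p-2) := Real.rpow_nonneg (norm_nonneg w) _
  have e1 : ‖(((‖z‖ ^ (p-2) : ℝ) : ℂ) * z - ((‖w‖ ^ (p-2) : ℝ) : ℂ) * w) * (starRingEnd ℂ) (z - w)‖
      = ‖((‖z‖ ^ (p-2) : ℝ) : ℂ) * z - ((‖w‖ ^ (p-2) : ℝ) : ℂ) * w‖ * ‖z - w‖ := by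
    rw [norm_mul, RCLike.norm_conj]
  rw [e1]
  have e2 : ‖((‖z‖ ^ (p-2) : ℝ) : ℂ) * z - ((‖w‖ ^ (p-2) : ℝ) : ℂ) * w‖
      ≤ ‖z‖ ^ (p-1) + ‖w‖ ^ (p-1) := by
    calc _ ≤ ‖((‖z‖ ^ (p-2) : ℝ) : ℂ) * z‖ + ‖((‖w‖ ^ (p-2) : ℝ) : ℂ) * w‖ := norm_sub_le _ _
    _ = ‖z‖ ^ (p-1) + ‖w‖ ^ (p-1) := by
        rw [norm_mul, norm_mul, Complex.norm_real, Complex.norm_real,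
          Real.norm_of_nonneg hu, Real.norm_of_nonneg hv, rpow_p1 hp (norm_nonneg z),
          rpow_p1 hp (norm_nonneg w)]
  have e3 : ‖z - w‖ ≤ ‖z‖ + ‖w‖ := norm_sub_le _ _
  calc ‖((‖z‖ ^ (p-2) : ℝ) : ℂ) * z - ((‖w‖ ^ (p-2) : ℝ) : ℂ) * w‖ * ‖z - w‖
      ≤ (‖z‖ ^ (p-1) + ‖w‖ ^ (p-1)) * (‖z‖ + ‖w‖) := by
        apply mul_le_mul e2 e3 (norm_nonneg _)
        positivity
    _ ≤ 2 * (‖z‖ ^ p + ‖w‖ ^ p) := by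
        have hm := mono_prod_nonneg hp (norm_nonneg z) (norm_nonneg w)
        have d1 := rpow_p2 hp (norm_nonneg z)
        have d2 := rpow_p2 hp (norm_nonneg w)
        nlinarith [hm, d1, d2]

private lemma re_id (a b : ℝ) (z w : ℂ) :
    (((a : ℂ) * z - (b : ℂ) * w) * (starRingEnd ℂ) (z - w)).re
      = a * (‖z‖ * ‖z‖) + b * (‖w‖ * ‖w‖) - (a + b) * (z * (starRingEnd ℂ) w).re := by
  have hz : ‖z‖ * ‖z‖ = z.re * z.re + z.im * z.im := by
    rw [← sq, Complex.sq_norm, Complex.normSq_apply]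
  have hw : ‖w‖ * ‖w‖ = w.re * w.re + w.im * w.im := by
    rw [← sq, Complex.sq_norm, Complex.normSq_apply]
  simp only [Complex.mul_re, Complex.mul_im, Complex.sub_re, Complex.sub_im,
    Complex.conj_re, Complex.conj_im, Complex.ofReal_re, Complex.ofReal_im, hz, hw]
  ring

private lemma re_decomp {p : ℝ} (hp : 1 < p) (z w : ℂ) :
    ((((‖z‖ ^ (p-2) : ℝ) : ℂ) * z - ((‖w‖ ^ (p-2) : ℝ) : ℂ) * w) * (starRingEnd ℂ) (z - w)).re
      = (‖z‖ ^ (p-1) - ‖w‖ ^ (p-1)) * (‖z‖ - ‖w‖)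
        + (‖z‖ ^ (p-2) + ‖w‖ ^ (p-2)) * (‖z‖ * ‖w‖ - (z * (starRingEnd ℂ) w).re) := by
  have h1 := rpow_p1 hp (norm_nonneg z)
  have h2 := rpow_p1 hp (norm_nonneg w)
  rw [re_id, ← h1, ← h2]; ring

private lemma re_cross_le (z w : ℂ) : (z * (starRingEnd ℂ) w).re ≤ ‖z‖ * ‖w‖ := by
  calc (z * (starRingEnd ℂ) w).re ≤ ‖z * (starRingEnd ℂ) w‖ := Complex.re_le_norm _
  _ = ‖z‖ * ‖w‖ := by rw [norm_mul, RCLike.norm_conj]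

private lemma re_nonneg' {p : ℝ} (hp : 1 < p) (z w : ℂ) :
    0 ≤ ((((‖z‖ ^ (p-2) : ℝ) : ℂ) * z - ((‖w‖ ^ (p-2) : ℝ) : ℂ) * w) * (starRingEnd ℂ) (z - w)).re := by
  rw [re_decomp hp]
  have hu : (0:ℝ) ≤ ‖z‖ ^ (p-2) := Real.rpow_nonneg (norm_nonneg z) _
  have hv : (0:ℝ) ≤ ‖w‖ ^ (p-2) := Real.rpow_nonneg (norm_nonneg w) _
  have hm := mono_prod_nonneg hp (norm_nonneg z) (norm_nonneg w)
  nlinarith [mul_nonneg (add_nonneg hu hv) (sub_nonneg.mpr (re_cross_le z w))]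

private lemma eq_of_re_zero {p : ℝ} (hp : 1 < p) {z w : ℂ}
    (h : ((((‖z‖ ^ (p-2) : ℝ) : ℂ) * z - ((‖w‖ ^ (p-2) : ℝ) : ℂ) * w) * (starRingEnd ℂ) (z - w)).re = 0) :
    z = w := by
  rw [re_decomp hp] at h
  have hu : (0:ℝ) ≤ ‖z‖ ^ (p-2) := Real.rpow_nonneg (norm_nonneg z) _
  have hv : (0:ℝ) ≤ ‖w‖ ^ (p-2) := Real.rpow_nonneg (norm_nonneg w) _
  have hm := mono_prod_nonneg hp (norm_nonneg z) (norm_nonneg w)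
  have hB0 : 0 ≤ (‖z‖ ^ (p-2) + ‖w‖ ^ (p-2)) * (‖z‖ * ‖w‖ - (z * (starRingEnd ℂ) w).re) :=
    mul_nonneg (add_nonneg hu hv) (sub_nonneg.mpr (re_cross_le z w))
  have hA : (‖z‖ ^ (p-1) - ‖w‖ ^ (p-1)) * (‖z‖ - ‖w‖) = 0 := by linarith
  have hB : (‖z‖ ^ (p-2) + ‖w‖ ^ (p-2)) * (‖z‖ * ‖w‖ - (z * (starRingEnd ℂ) w).re) = 0 := by
    linarith
  by_cases hz0 : z = 0
  · subst hz0
    by_contra hw0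
    have hw0' : w ≠ 0 := fun hh => hw0 hh.symm
    have ht : 0 < ‖w‖ := norm_pos_iff.mpr hw0'
    have h1 : (0:ℝ) ^ (p-1) = 0 := Real.zero_rpow (by intro hh; nlinarith [hh])
    have h2 : 0 < ‖w‖ ^ (p-1) := Real.rpow_pos_of_pos ht _
    rw [norm_zero, h1] at hA
    nlinarith
  · by_cases hw0 : w = 0
    · subst hw0
      exfalso
      have hr : 0 < ‖z‖ := norm_pos_iff.mpr hz0
      have h1 : (0:ℝ) ^ (p-1) = 0 := Real.zero_rpow (by intro hh; nlinarith [hh])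
      have h2 : 0 < ‖z‖ ^ (p-1) := Real.rpow_pos_of_pos hr _
      rw [norm_zero, h1] at hA
      nlinarith
    · have hr : 0 < ‖z‖ := norm_pos_iff.mpr hz0
      have ht : 0 < ‖w‖ := norm_pos_iff.mpr hw0
      have hrt : ‖z‖ = ‖w‖ := by
        rcases lt_trichotomy ‖z‖ ‖w‖ with hlt | heq | hgt
        · exfalso
          have := Real.rpow_lt_rpow (le_of_lt hr) hlt (by linarith : (0:ℝ) < p - 1)
          nlinarith
        · exact heq
        · exfalso
          have := Real.rpow_lt_rpow (le_of_lt ht) hgt (by linarith : (0:ℝ) < p - 1)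
          nlinarith
      have hX : (z * (starRingEnd ℂ) w).re = ‖z‖ * ‖w‖ := by
        have hupos : 0 < ‖z‖ ^ (p-2) := Real.rpow_pos_of_pos hr _
        have hle := re_cross_le z w
        nlinarith
      set q := z * (starRingEnd ℂ) w with hq
      have habs : ‖q‖ = ‖z‖ * ‖w‖ := by
        rw [hq, norm_mul, RCLike.norm_conj]
      have him : q.im = 0 := by
        have hsq := Complex.sq_norm q
        rw [Complex.normSq_apply, habs, hX] at hsq
        have : q.im * q.im = 0 := by nlinarith [hsq]
        exact mul_self_eq_zero.mp this
      have hqval : q = ((‖z‖ * ‖w‖ : ℝ) : ℂ) := by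
        apply Complex.ext
        · simpa using hX
        · simpa using him
      have hww : w * (starRingEnd ℂ) w = ((‖z‖ * ‖w‖ : ℝ) : ℂ) := by
        rw [Complex.mul_conj, hrt]
        norm_cast
        rw [Complex.normSq_eq_norm_sq, sq]
      have hzw : (z - w) * (starRingEnd ℂ) w = 0 := by
        rw [sub_mul, ← hq, hqval, hww, sub_self]
      have hcw : (starRingEnd ℂ) w ≠ 0 := by
        simpa using hw0
      rcases mul_eq_zero.mp hzw with hh | hh
      · exact sub_eq_zero.mp hh
      · exact absurd hh hcw

/-- for `f₁, f₂ ∈ BD_p(G)` the pairing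
`⟨Δ_p f₁ − Δ_p f₂, f₁ − f₂⟩` vanishes iff the increments of `f₁` and `f₂` agree. -/
theorem pairing_zero_iff {G : Type*} [Group G] [Infinite G] (S : Finset G)
    (hS : PHB.SymmGen S) (p : ℝ) (hp : 1 < p) (f1 f2 : G → ℂ)
    (h1 : PHB.MemBDp p S f1) (h2 : PHB.MemBDp p S f2) :
    (∑' g : G, ∑ s ∈ S,
      (((‖f1 (g * s⁻¹) - f1 g‖ ^ (p - 2) : ℝ) : ℂ) * (f1 (g * s⁻¹) - f1 g) -
        ((‖f2 (g * s⁻¹) - f2 g‖ ^ (p - 2) : ℝ) : ℂ) * (f2 (g * s⁻¹) - f2 g)) *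
        (starRingEnd ℂ) ((f1 (g * s⁻¹) - f1 g) - (f2 (g * s⁻¹) - f2 g))) = 0 ↔
    ∀ g : G, ∀ s ∈ S, f1 (g * s⁻¹) - f1 g = f2 (g * s⁻¹) - f2 g := by
  classical
  set T : G → G → ℂ := fun g s =>
    (((‖f1 (g * s⁻¹) - f1 g‖ ^ (p - 2) : ℝ) : ℂ) * (f1 (g * s⁻¹) - f1 g) -
      ((‖f2 (g * s⁻¹) - f2 g‖ ^ (p - 2) : ℝ) : ℂ) * (f2 (g * s⁻¹) - f2 g)) *
      (starRingEnd ℂ) ((f1 (g * s⁻¹) - f1 g) - (f2 (g * s⁻¹) - f2 g)) with hT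
  constructor
  · intro H g s hs
    have hBsum : Summable (fun g : G => ∑ s ∈ S,
        2 * (PHB.dpTerm p f1 s g + PHB.dpTerm p f2 s g)) :=
      summable_finset_sum S _ fun s hs => ((h1.2 s hs).add (h2.2 s hs)).mul_left 2
    have hbound : ∀ g : G, ‖∑ s ∈ S, T g s‖
        ≤ ∑ s ∈ S, 2 * (PHB.dpTerm p f1 s g + PHB.dpTerm p f2 s g) := by
      intro g
      refine (norm_sum_le _ _).trans (Finset.sum_le_sum ?_)
      intro s hs
      simp only [hT]
      have := norm_term_le hp (f1 (g * s⁻¹) - f1 g) (f2 (g * s⁻¹) - f2 g)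
      simpa [PHB.dpTerm] using this
    have hsum : Summable (fun g : G => ∑ s ∈ S, T g s) :=
      Summable.of_norm (Summable.of_nonneg_of_le (fun g => norm_nonneg _) hbound hBsum)
    have hre0 : ∑' g : G, (∑ s ∈ S, T g s).re = 0 := by
      rw [← Complex.re_tsum hsum, H, Complex.zero_re]
    have hresum : Summable fun g : G => (∑ s ∈ S, T g s).re :=
      ((Complex.hasSum_iff _ _).mp hsum.hasSum).1.summable
    have hnn : ∀ g : G, 0 ≤ (∑ s ∈ S, T g s).re := by
      intro g
      rw [Complex.re_sum]
      refine Finset.sum_nonneg fun s hs => ?_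
      simp only [hT]
      exact re_nonneg' hp _ _
    have hg : (∑ s ∈ S, T g s).re = 0 := by
      have hle := Summable.le_tsum hresum g fun j _ => hnn j
      rw [hre0] at hle
      exact le_antisymm hle (hnn g)
    rw [Complex.re_sum] at hg
    have hterm : (T g s).re = 0 := by
      refine (Finset.sum_eq_zero_iff_of_nonneg fun s hs => ?_).mp hg s hs
      simp only [hT]
      exact re_nonneg' hp _ _
    refine eq_of_re_zero hp ?_
    simpa [hT] using hterm
  · intro H
    have hz : ∀ g : G, ∑ s ∈ S, T g s = 0 := by
      intro g
      apply Finset.sum_eq_zero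
      intro s hs
      simp only [hT, H g s hs, sub_self, map_zero, mul_zero]
    calc (∑' g : G, ∑ s ∈ S, T g s) = ∑' _ : G, (0 : ℂ) := tsum_congr hz
    _ = 0 := tsum_zero
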